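/- arXiv:2403.15359 — 2 statements merged into one kernel-verified Lean document; each statement's English description precedes it below -/
import Mathlib

section
/- Let $X=(X_1,\dots,X_n)$ be a vector of independent random variables taking values in a measurable space, and let $X'$ be an independent copy of $X$. For a subset $A\subseteq[n]$ let $X^A$ denote the vector whose $i$-th coordinate is $X_i'$ if $i\in A$ and $X_i$ otherwise. For bounded measurable $f,h:\mathcal X^n\to\mathbb C$ and $j\in[n]$ set $\Delta_j f(X)=f(X)-f(X^{\{j\}})$. Then $\mathrm{Cov}(h(X),f(X)) = \tfrac12\sum_{A\subsetneq[n]} \frac{1}{\binom{n}{|A|}(n-|A|)} \sum_{j\notin A} \mathbb E\{\Delta_j h(X)\,\Delta_j f(X^A)\}$, where the sum over $A$ includes the empty set. -/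
open MeasureTheory ProbabilityTheory Finset

namespace ChatterjeeAux

variable {𝒳 : Type*} [MeasurableSpace 𝒳] {n : ℕ}

/-- Coordinate selection: use the `inr` (primed) copy on `A`, the `inl` copy elsewhere. -/
def Tsel (A : Finset (Fin n)) (x : Fin n ⊕ Fin n → 𝒳) : Fin n → 𝒳 :=
  fun i => x (if i ∈ A then Sum.inr i else Sum.inl i)

lemma measurable_Tsel (A : Finset (Fin n)) : Measurable (Tsel (𝒳 := 𝒳) A) :=
  measurable_pi_lambda _ fun _ => measurable_pi_apply _

/-- swap the two copies of coordinate `j` -/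
def sw (j : Fin n) : (Fin n ⊕ Fin n) ≃ (Fin n ⊕ Fin n) :=
  Equiv.swap (Sum.inl j) (Sum.inr j)

lemma sw_invol (j : Fin n) (k : Fin n ⊕ Fin n) : sw j (sw j k) = k := by
  simp [sw, Equiv.swap_apply_self]

lemma Tsel_sw (A : Finset (Fin n)) (j : Fin n) (hj : j ∉ A) (x : Fin n ⊕ Fin n → 𝒳) :
    Tsel A (fun k => x (sw j k)) = Tsel (insert j A) x := by
  funext i
  by_cases hij : i = j
  · subst hij
    simp [Tsel, sw, hj, Equiv.swap_apply_left]
  · have h1 : (Sum.inl i : Fin n ⊕ Fin n) ≠ Sum.inl j := by simp [hij]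
    have h1' : (Sum.inl i : Fin n ⊕ Fin n) ≠ Sum.inr j := by simp
    have h2 : (Sum.inr i : Fin n ⊕ Fin n) ≠ Sum.inl j := by simp
    have h2' : (Sum.inr i : Fin n ⊕ Fin n) ≠ Sum.inr j := by simp [hij]
    by_cases hA : i ∈ A <;>
      simp [Tsel, sw, hA, hij, Equiv.swap_apply_of_ne_of_ne, h1, h1', h2, h2',
        Finset.mem_insert]

lemma Tsel_sw_insert (A : Finset (Fin n)) (j : Fin n) (hj : j ∉ A) (x : Fin n ⊕ Fin n → 𝒳) :
    Tsel (insert j A) (fun k => x (sw j k)) = Tsel A x := by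
  have h := Tsel_sw A j hj (fun k => x (sw j k))
  simpa [sw_invol] using h.symm

lemma measurePreserving_sw (ρ : Fin n ⊕ Fin n → Measure 𝒳) [∀ k, IsProbabilityMeasure (ρ k)]
    (j : Fin n) (hρ : ∀ k, ρ (sw j k) = ρ k) :
    MeasurePreserving (fun x : Fin n ⊕ Fin n → 𝒳 => fun k => x (sw j k))
      (Measure.pi ρ) (Measure.pi ρ) := by
  have heq : (fun x : Fin n ⊕ Fin n → 𝒳 => fun k => x (sw j k))
      = ⇑(MeasurableEquiv.piCongrLeft (fun _ => 𝒳) (sw j)) := by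
    funext x k
    have : (MeasurableEquiv.piCongrLeft (fun _ => 𝒳) (sw j)) x (sw j (sw j k))
        = x (sw j k) := MeasurableEquiv.piCongrLeft_apply_apply (β := fun _ => 𝒳) (sw j) x (sw j k)
    rw [sw_invol] at this
    exact this.symm
  have h := MeasureTheory.measurePreserving_piCongrLeft (fun k => ρ k) (sw j)
  have hpi : (Measure.pi fun k => ρ (sw j k)) = Measure.pi ρ := by
    congr 1; funext k; exact hρ k
  rw [hpi] at h
  rw [heq]
  exact h

lemma integral_sw (ρ : Fin n ⊕ Fin n → Measure 𝒳) [∀ k, IsProbabilityMeasure (ρ k)]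
    (j : Fin n) (hρ : ∀ k, ρ (sw j k) = ρ k) (g : (Fin n ⊕ Fin n → 𝒳) → ℂ) :
    ∫ x, g (fun k => x (sw j k)) ∂(Measure.pi ρ) = ∫ x, g x ∂(Measure.pi ρ) := by
  have h := measurePreserving_sw ρ j hρ
  have hemb : MeasurableEmbedding (fun x : Fin n ⊕ Fin n → 𝒳 => fun k => x (sw j k)) := by
    have heq : (fun x : Fin n ⊕ Fin n → 𝒳 => fun k => x (sw j k))
        = ⇑(MeasurableEquiv.piCongrLeft (fun _ => 𝒳) (sw j)) := by
      funext x k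
      have : (MeasurableEquiv.piCongrLeft (fun _ => 𝒳) (sw j)) x (sw j (sw j k))
          = x (sw j k) := MeasurableEquiv.piCongrLeft_apply_apply (β := fun _ => 𝒳) (sw j) x (sw j k)
      rw [sw_invol] at this
      exact this.symm
    rw [heq]
    exact (MeasurableEquiv.piCongrLeft (fun _ => 𝒳) (sw j)).measurableEmbedding
  exact h.integral_comp hemb g


lemma nat_choose_id {n m : ℕ} (h1 : 1 ≤ m) (h2 : m ≤ n) :
    n.choose m * m = n.choose (m - 1) * (n - (m - 1)) := by
  have h := Nat.choose_succ_right_eq n (m - 1)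
  have h3 : m - 1 + 1 = m := by omega
  rwa [h3] at h

lemma coef_insert {n m : ℕ} (h1 : 1 ≤ m) (h2 : m ≤ n) :
    (m : ℂ) * (1 / ((n.choose (m - 1) : ℂ) * ((n - (m - 1) : ℕ) : ℂ)))
      = 1 / (n.choose m : ℂ) := by
  have hc1 : (n.choose (m - 1) : ℂ) ≠ 0 := by
    exact_mod_cast (Nat.choose_pos (le_trans (Nat.pred_le m) h2)).ne'
  have hc2 : (n.choose m : ℂ) ≠ 0 := by exact_mod_cast (Nat.choose_pos h2).ne'
  have hd : ((n - (m - 1) : ℕ) : ℂ) ≠ 0 := by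
    have : n - (m - 1) ≠ 0 := by omega
    exact_mod_cast this
  have hkeyC : (n.choose m : ℂ) * m = (n.choose (m - 1) : ℂ) * ((n - (m - 1) : ℕ) : ℂ) := by
    exact_mod_cast congrArg (Nat.cast (R := ℂ)) (nat_choose_id h1 h2)
  field_simp
  linear_combination hkeyC

lemma coef_compl {n m : ℕ} (h : m < n) :
    (1 / ((n.choose m : ℂ) * ((n - m : ℕ) : ℂ))) * ((n - m : ℕ) : ℂ)
      = 1 / (n.choose m : ℂ) := by
  have hc : (n.choose m : ℂ) ≠ 0 := by exact_mod_cast (Nat.choose_pos h.le).ne'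
  have hd : ((n - m : ℕ) : ℂ) ≠ 0 := by
    have : n - m ≠ 0 := by omega
    exact_mod_cast this
  field_simp

lemma telescope (n : ℕ) (I : Finset (Fin n) → ℂ) :
    ∑ A ∈ (Finset.univ : Finset (Fin n)).powerset.filter (· ≠ Finset.univ),
        (1 / ((n.choose A.card : ℂ) * ((n - A.card : ℕ) : ℂ))) *
          ∑ j ∈ Aᶜ, (I A - I (insert j A))
      = I ∅ - I Finset.univ := by
  classical
  set s := (Finset.univ : Finset (Fin n)).powerset.filter (· ≠ Finset.univ) with hs
  set t := (Finset.univ : Finset (Fin n)).powerset.filter (· ≠ (∅ : Finset (Fin n))) with ht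
  set w : ℕ → ℂ := fun m => 1 / ((n.choose m : ℂ) * ((n - m : ℕ) : ℂ)) with hw
  set u : Finset (Fin n) → ℂ := fun B => (1 / (n.choose B.card : ℂ)) * I B with hu
  have cardlt : ∀ A ∈ s, A.card < n := by
    intro A hA
    simp only [hs, mem_filter, mem_powerset] at hA
    have h1 : A ⊂ Finset.univ := lt_of_le_of_ne (Finset.subset_univ A) hA.2
    have := Finset.card_lt_card h1
    simpa using this
  have hcompl : ∀ A : Finset (Fin n), Aᶜ.card = n - A.card := by
    intro A; simp [Finset.card_compl]
  have stepA : ∀ A ∈ s, w A.card * ∑ j ∈ Aᶜ, (I A - I (insert j A))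
      = u A - ∑ j ∈ Aᶜ, w A.card * I (insert j A) := by
    intro A hA
    rw [Finset.sum_sub_distrib, Finset.sum_const, mul_sub, Finset.mul_sum]
    congr 1
    simp only [hw, hu]
    rw [nsmul_eq_mul, hcompl A, ← mul_assoc, coef_compl (cardlt A hA)]
  rw [Finset.sum_congr rfl stepA, Finset.sum_sub_distrib]
  have stepB : ∑ A ∈ s, ∑ j ∈ Aᶜ, w A.card * I (insert j A) = ∑ B ∈ t, u B := by
    have hre : ∑ A ∈ s, ∑ j ∈ Aᶜ, w A.card * I (insert j A)
        = ∑ B ∈ t, ∑ j ∈ B, w (B.card - 1) * I B := by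
      rw [Finset.sum_sigma', Finset.sum_sigma']
      refine Finset.sum_nbij' (fun p => ⟨insert p.2 p.1, p.2⟩)
        (fun p => ⟨p.1.erase p.2, p.2⟩) ?_ ?_ ?_ ?_ ?_
      · rintro ⟨A, j⟩ hp
        simp only [Finset.mem_sigma, hs, mem_filter, mem_powerset, Finset.mem_compl] at hp
        simp only [Finset.mem_sigma, ht, mem_filter, mem_powerset]
        refine ⟨⟨Finset.subset_univ _, ?_⟩, Finset.mem_insert_self _ _⟩
        exact Finset.insert_ne_empty _ _
      · rintro ⟨B, j⟩ hp
        simp only [Finset.mem_sigma, ht, mem_filter, mem_powerset] at hp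
        simp only [Finset.mem_sigma, hs, mem_filter, mem_powerset, Finset.mem_compl]
        refine ⟨⟨Finset.subset_univ _, ?_⟩, Finset.notMem_erase _ _⟩
        intro hcon
        have : j ∈ B.erase j := hcon ▸ Finset.mem_univ j
        exact Finset.notMem_erase j B this
      · rintro ⟨A, j⟩ hp
        simp only [Finset.mem_sigma, hs, mem_filter, mem_powerset, Finset.mem_compl] at hp
        simp [Finset.erase_insert hp.2]
      · rintro ⟨B, j⟩ hp
        simp only [Finset.mem_sigma, ht, mem_filter, mem_powerset] at hp
        simp [Finset.insert_erase hp.2]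
      · rintro ⟨A, j⟩ hp
        simp only [Finset.mem_sigma, hs, mem_filter, mem_powerset, Finset.mem_compl] at hp
        have : (insert j A).card = A.card + 1 := Finset.card_insert_of_notMem hp.2
        simp [this]
    rw [hre]
    refine Finset.sum_congr rfl fun B hB => ?_
    simp only [ht, mem_filter, mem_powerset] at hB
    have hBpos : 1 ≤ B.card := Finset.card_pos.mpr (Finset.nonempty_of_ne_empty hB.2)
    have hBle : B.card ≤ n := by
      have := Finset.card_le_univ B; simpa using this
    rw [Finset.sum_const, nsmul_eq_mul, ← mul_assoc, hu]
    congr 1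
    exact coef_insert hBpos hBle
  rw [stepB]
  have hsE : s = (Finset.univ : Finset (Fin n)).powerset.erase Finset.univ := by
    rw [hs, Finset.filter_ne']
  have htE : t = (Finset.univ : Finset (Fin n)).powerset.erase ∅ := by
    rw [ht, Finset.filter_ne']
  have huniv : Finset.univ ∈ (Finset.univ : Finset (Fin n)).powerset := by
    simp
  have hempty : (∅ : Finset (Fin n)) ∈ (Finset.univ : Finset (Fin n)).powerset := by
    simp
  rw [hsE, htE, Finset.sum_erase_eq_sub huniv, Finset.sum_erase_eq_sub hempty]
  have hu0 : u ∅ = I ∅ := by simp [hu]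
  have hu1 : u Finset.univ = I Finset.univ := by
    simp [hu, Finset.card_univ, Fintype.card_fin]
  rw [hu0, hu1]
  ring

end ChatterjeeAux

open ChatterjeeAux in
/-- Chatterjee's covariance formula for functions of independent random variables
(Lemma 2.3 of Chatterjee 2008, Lemma 4.1 of the paper). -/
theorem chatterjee_covariance_formula
    {Ω 𝒳 : Type*} [MeasurableSpace Ω] [MeasurableSpace 𝒳]
    (P : Measure Ω) [IsProbabilityMeasure P] (n : ℕ)
    (X X' : Ω → Fin n → 𝒳)
    (hXm : ∀ i, Measurable fun ω => X ω i)
    (hX'm : ∀ i, Measurable fun ω => X' ω i)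
    (hindep : iIndepFun
      (fun p => Sum.elim (fun i ω => X ω i) (fun i ω => X' ω i) p) P)
    (hid : ∀ i, IdentDistrib (fun ω => X ω i) (fun ω => X' ω i) P P)
    (f h : (Fin n → 𝒳) → ℂ) (hf : Measurable f) (hh : Measurable h)
    (hfb : ∃ M, ∀ x, ‖f x‖ ≤ M) (hhb : ∃ M, ∀ x, ‖h x‖ ≤ M) :
    (∫ ω, h (X ω) * f (X ω) ∂P) - (∫ ω, h (X ω) ∂P) * (∫ ω, f (X ω) ∂P)
      = (1 / 2) * ∑ A ∈ (Finset.univ : Finset (Fin n)).powerset.filter (· ≠ Finset.univ),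
          (1 / ((n.choose A.card : ℂ) * ((n - A.card : ℕ) : ℂ))) *
          ∑ j ∈ Aᶜ,
            ∫ ω, (h (X ω) - h (fun i => if i = j then X' ω i else X ω i)) *
              (f (fun i => if i ∈ A then X' ω i else X ω i) -
               f (fun i => if i ∈ insert j A then X' ω i else X ω i)) ∂P := by
  classical
  obtain ⟨Mf₀, hMf₀⟩ := hfb
  obtain ⟨Mh₀, hMh₀⟩ := hhb
  set Mf := max Mf₀ 0 with hMfdef
  set Mh := max Mh₀ 0 with hMhdef
  have hMf : ∀ x, ‖f x‖ ≤ Mf := fun x => le_trans (hMf₀ x) (le_max_left _ _)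
  have hMh : ∀ x, ‖h x‖ ≤ Mh := fun x => le_trans (hMh₀ x) (le_max_left _ _)
  have hMf0 : 0 ≤ Mf := le_max_right _ _
  have hMh0 : 0 ≤ Mh := le_max_right _ _
  set ν : Fin n → Measure 𝒳 := fun i => P.map (fun ω => X ω i) with hνdef
  set ρ : Fin n ⊕ Fin n → Measure 𝒳 := Sum.elim ν ν with hρdef
  set F : Fin n ⊕ Fin n → Ω → 𝒳 :=
    fun p => Sum.elim (fun i ω => X ω i) (fun i ω => X' ω i) p with hFdef
  have hF : ∀ k, Measurable (F k) := by
    rintro (i | i)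
    · exact hXm i
    · exact hX'm i
  set Φ : Ω → (Fin n ⊕ Fin n → 𝒳) := fun ω k => F k ω with hΦdef
  have hΦ : Measurable Φ := measurable_pi_lambda _ hF
  have hρlaw : ∀ k, ρ k = P.map (F k) := by
    rintro (i | i)
    · rfl
    · exact (hid i).map_eq
  haveI hρprob : ∀ k, IsProbabilityMeasure (ρ k) := by
    intro k; rw [hρlaw k]; exact Measure.isProbabilityMeasure_map (hF k).aemeasurable
  -- identification of the joint law
  have hmap : P.map Φ = Measure.pi ρ := by
    refine (Measure.pi_eq fun ss hss => ?_).symm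
    rw [Measure.map_apply hΦ (MeasurableSet.univ_pi hss)]
    have hpre : Φ ⁻¹' (Set.univ.pi ss) = ⋂ k, F k ⁻¹' ss k := by
      ext ω
      simp [hΦdef, Set.mem_pi]
    rw [hpre, hindep.meas_iInter (fun k => ⟨ss k, hss k, rfl⟩)]
    refine Finset.prod_congr rfl fun k _ => ?_
    rw [hρlaw k, Measure.map_apply (hF k) (hss k)]
  haveI : IsProbabilityMeasure (Measure.pi ρ) := by infer_instance
  -- transfer of integrals
  have key : ∀ (G : (Fin n ⊕ Fin n → 𝒳) → ℂ), Measurable G →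
      ∫ ω, G (Φ ω) ∂P = ∫ x, G x ∂(Measure.pi ρ) := by
    intro G hG
    rw [← hmap, integral_map hΦ.aemeasurable hG.aestronglyMeasurable]
  -- integrability of products
  have hintP : ∀ (B A : Finset (Fin n)),
      Integrable (fun x => h (Tsel B x) * f (Tsel A x)) (Measure.pi ρ) := by
    intro B A
    refine ⟨((hh.comp (measurable_Tsel B)).mul
      (hf.comp (measurable_Tsel A))).aestronglyMeasurable, ?_⟩
    refine HasFiniteIntegral.of_bounded (C := Mh * Mf) (ae_of_all _ fun x => ?_)
    rw [norm_mul]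
    exact mul_le_mul (hMh _) (hMf _) (norm_nonneg _) hMh0
  set J : Finset (Fin n) → Finset (Fin n) → ℂ :=
    fun B A => ∫ x, h (Tsel B x) * f (Tsel A x) ∂(Measure.pi ρ) with hJdef
  have hT : ∀ (A : Finset (Fin n)) ω,
      Tsel A (Φ ω) = fun i => if i ∈ A then X' ω i else X ω i := by
    intro A ω
    funext i
    by_cases hi : i ∈ A <;> simp [Tsel, hi, hΦdef, hFdef]
  have hT0 : ∀ ω, Tsel (∅ : Finset (Fin n)) (Φ ω) = X ω := by
    intro ω; rw [hT]; simp
  -- LHS first term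
  have hLHS1 : ∫ ω, h (X ω) * f (X ω) ∂P = J ∅ ∅ := by
    show _ = ∫ x, h (Tsel ∅ x) * f (Tsel ∅ x) ∂(Measure.pi ρ)
    refine Eq.trans ?_ (key (fun x => h (Tsel ∅ x) * f (Tsel ∅ x))
      ((hh.comp (measurable_Tsel ∅)).mul (hf.comp (measurable_Tsel ∅))))
    exact integral_congr_ae (ae_of_all _ fun ω => by beta_reduce; rw [hT0 ω])
  -- swap invariance of ρ
  have hswR : ∀ (j : Fin n) k, ρ (sw j k) = ρ k := by
    intro j k
    rcases k with i | i
    · by_cases hij : i = j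
      · subst hij; simp [sw, Equiv.swap_apply_left, hρdef]
      · simp [sw, Equiv.swap_apply_of_ne_of_ne,
          (by simp [hij] : (Sum.inl i : Fin n ⊕ Fin n) ≠ Sum.inl j),
          (by simp : (Sum.inl i : Fin n ⊕ Fin n) ≠ Sum.inr j)]
    · by_cases hij : i = j
      · subst hij; simp [sw, Equiv.swap_apply_right, hρdef]
      · simp [sw, Equiv.swap_apply_of_ne_of_ne,
          (by simp : (Sum.inr i : Fin n ⊕ Fin n) ≠ Sum.inl j),
          (by simp [hij] : (Sum.inr i : Fin n ⊕ Fin n) ≠ Sum.inr j)]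
  -- the swap identities
  have hswap1 : ∀ (A : Finset (Fin n)) (j : Fin n), j ∉ A →
      J {j} A = J ∅ (insert j A) := by
    intro A j hj
    show (∫ x, h (Tsel {j} x) * f (Tsel A x) ∂(Measure.pi ρ))
      = ∫ x, h (Tsel ∅ x) * f (Tsel (insert j A) x) ∂(Measure.pi ρ)
    have hsw := integral_sw ρ j (hswR j) (fun x => h (Tsel {j} x) * f (Tsel A x))
    refine hsw.symm.trans (integral_congr_ae (ae_of_all _ fun x => ?_))
    have e1 : Tsel ({j} : Finset (Fin n)) (fun k => x (sw j k)) = Tsel ∅ x := by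
      simpa using Tsel_sw_insert (∅ : Finset (Fin n)) j (by simp) x
    show h (Tsel {j} (fun k => x (sw j k))) * f (Tsel A (fun k => x (sw j k))) = _
    rw [e1, Tsel_sw A j hj x]
  have hswap2 : ∀ (A : Finset (Fin n)) (j : Fin n), j ∉ A →
      J {j} (insert j A) = J ∅ A := by
    intro A j hj
    show (∫ x, h (Tsel {j} x) * f (Tsel (insert j A) x) ∂(Measure.pi ρ))
      = ∫ x, h (Tsel ∅ x) * f (Tsel A x) ∂(Measure.pi ρ)
    have hsw := integral_sw ρ j (hswR j)
      (fun x => h (Tsel {j} x) * f (Tsel (insert j A) x))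
    refine hsw.symm.trans (integral_congr_ae (ae_of_all _ fun x => ?_))
    have e1 : Tsel ({j} : Finset (Fin n)) (fun k => x (sw j k)) = Tsel ∅ x := by
      simpa using Tsel_sw_insert (∅ : Finset (Fin n)) j (by simp) x
    show h (Tsel {j} (fun k => x (sw j k)))
        * f (Tsel (insert j A) (fun k => x (sw j k))) = _
    rw [e1, Tsel_sw_insert A j hj x]
  -- per-term identity
  have hterm : ∀ (A : Finset (Fin n)) (j : Fin n), j ∉ A →
      (∫ ω, (h (X ω) - h (fun i => if i = j then X' ω i else X ω i)) *
        (f (fun i => if i ∈ A then X' ω i else X ω i) -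
         f (fun i => if i ∈ insert j A then X' ω i else X ω i)) ∂P)
      = 2 * (J ∅ A - J ∅ (insert j A)) := by
    intro A j hj
    have hmeasG : Measurable (fun x => (h (Tsel ∅ x) - h (Tsel {j} x)) *
        (f (Tsel A x) - f (Tsel (insert j A) x))) :=
      ((hh.comp (measurable_Tsel ∅)).sub (hh.comp (measurable_Tsel {j}))).mul
        ((hf.comp (measurable_Tsel A)).sub (hf.comp (measurable_Tsel (insert j A))))
    have step1 : (∫ ω, (h (X ω) - h (fun i => if i = j then X' ω i else X ω i)) *
        (f (fun i => if i ∈ A then X' ω i else X ω i) -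
         f (fun i => if i ∈ insert j A then X' ω i else X ω i)) ∂P)
        = ∫ x, (h (Tsel ∅ x) - h (Tsel {j} x)) *
            (f (Tsel A x) - f (Tsel (insert j A) x)) ∂(Measure.pi ρ) := by
      refine Eq.trans ?_ (key _ hmeasG)
      refine integral_congr_ae (ae_of_all _ fun ω => ?_)
      beta_reduce
      have e1 : Tsel ({j} : Finset (Fin n)) (Φ ω)
          = fun i => if i = j then X' ω i else X ω i := by
        rw [hT]
        funext i
        by_cases hij : i = j <;> simp [hij]
      rw [hT0 ω, e1, hT, hT]
    rw [step1]
    have expand : (fun x => (h (Tsel ∅ x) - h (Tsel {j} x)) *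
        (f (Tsel A x) - f (Tsel (insert j A) x)))
        = (fun x => (h (Tsel ∅ x) * f (Tsel A x)
            - h (Tsel ∅ x) * f (Tsel (insert j A) x))
          - (h (Tsel {j} x) * f (Tsel A x)
            - h (Tsel {j} x) * f (Tsel (insert j A) x))) := by
      funext x; ring
    have i1 : Integrable (fun x => h (Tsel ∅ x) * f (Tsel A x)
        - h (Tsel ∅ x) * f (Tsel (insert j A) x)) (Measure.pi ρ) :=
      (hintP ∅ A).sub (hintP ∅ (insert j A))
    have i2 : Integrable (fun x => h (Tsel {j} x) * f (Tsel A x)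
        - h (Tsel {j} x) * f (Tsel (insert j A) x)) (Measure.pi ρ) :=
      (hintP {j} A).sub (hintP {j} (insert j A))
    rw [expand, integral_sub i1 i2,
      integral_sub (hintP ∅ A) (hintP ∅ (insert j A)),
      integral_sub (hintP {j} A) (hintP {j} (insert j A))]
    have r1 : (∫ x, h (Tsel ∅ x) * f (Tsel A x) ∂(Measure.pi ρ)) = J ∅ A := rfl
    have r2 : (∫ x, h (Tsel ∅ x) * f (Tsel (insert j A) x) ∂(Measure.pi ρ))
        = J ∅ (insert j A) := rfl
    have r3 : (∫ x, h (Tsel {j} x) * f (Tsel A x) ∂(Measure.pi ρ)) = J {j} A := rfl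
    have r4 : (∫ x, h (Tsel {j} x) * f (Tsel (insert j A) x) ∂(Measure.pi ρ))
        = J {j} (insert j A) := rfl
    rw [r1, r2, r3, r4, hswap1 A j hj, hswap2 A j hj]
    ring
  -- product structure: second LHS term
  have hprod : (∫ ω, h (X ω) ∂P) * (∫ ω, f (X ω) ∂P) = J ∅ Finset.univ := by
    set e := MeasurableEquiv.sumPiEquivProdPi (fun _ : Fin n ⊕ Fin n => 𝒳) with hedef
    set μ1 := Measure.pi fun i : Fin n => ρ (Sum.inl i) with hμ1def
    set μ2 := Measure.pi fun i : Fin n => ρ (Sum.inr i) with hμ2def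
    have hmes : MeasurePreserving e.symm (μ1.prod μ2) (Measure.pi ρ) :=
      measurePreserving_sumPiEquivProdPi_symm ρ
    haveI : IsProbabilityMeasure μ1 := by rw [hμ1def]; infer_instance
    haveI : IsProbabilityMeasure μ2 := by rw [hμ2def]; infer_instance
    have hTl : ∀ (p : (Fin n → 𝒳) × (Fin n → 𝒳)),
        Tsel (∅ : Finset (Fin n)) (e.symm p) = p.1 := by
      intro p; funext i; rfl
    have hTr : ∀ (p : (Fin n → 𝒳) × (Fin n → 𝒳)),
        Tsel (Finset.univ : Finset (Fin n)) (e.symm p) = p.2 := by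
      intro p; funext i
      show (e.symm p) (if i ∈ Finset.univ then Sum.inr i else Sum.inl i) = p.2 i
      rw [if_pos (Finset.mem_univ i)]
      rfl
    have hJu : J ∅ Finset.univ = (∫ y, h y ∂μ1) * ∫ z, f z ∂μ2 := by
      show (∫ x, h (Tsel ∅ x) * f (Tsel Finset.univ x) ∂(Measure.pi ρ)) = _
      have c1 := hmes.integral_comp e.symm.measurableEmbedding
        (fun x => h (Tsel ∅ x) * f (Tsel Finset.univ x))
      refine c1.symm.trans ?_
      have c2 : (∫ p, h (Tsel (∅ : Finset (Fin n)) (e.symm p))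
          * f (Tsel (Finset.univ : Finset (Fin n)) (e.symm p)) ∂(μ1.prod μ2))
          = ∫ p : (Fin n → 𝒳) × (Fin n → 𝒳), h p.1 * f p.2 ∂(μ1.prod μ2) := by
        refine integral_congr_ae (ae_of_all _ fun p => ?_)
        beta_reduce
        rw [hTl p, hTr p]
      exact c2.trans (integral_prod_mul h f)
    have hEh : (∫ ω, h (X ω) ∂P) = ∫ y, h y ∂μ1 := by
      have h1 : (∫ ω, h (X ω) ∂P) = ∫ x, h (Tsel ∅ x) ∂(Measure.pi ρ) := by
        refine Eq.trans ?_ (key (fun x => h (Tsel ∅ x)) (hh.comp (measurable_Tsel ∅)))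
        exact integral_congr_ae (ae_of_all _ fun ω => by beta_reduce; rw [hT0 ω])
      have c1 := hmes.integral_comp e.symm.measurableEmbedding (fun x => h (Tsel ∅ x))
      have c2 : (∫ p, h (Tsel (∅ : Finset (Fin n)) (e.symm p)) ∂(μ1.prod μ2))
          = ∫ p : (Fin n → 𝒳) × (Fin n → 𝒳), h p.1 * (fun _ : Fin n → 𝒳 => (1 : ℂ)) p.2
            ∂(μ1.prod μ2) := by
        refine integral_congr_ae (ae_of_all _ fun p => ?_)
        beta_reduce
        rw [hTl p]; simp
      have c3 := integral_prod_mul (μ := μ1) (ν := μ2) h (fun _ => (1 : ℂ))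
      have c4 : (∫ z, (1 : ℂ) ∂μ2) = 1 := by simp
      rw [h1, ← c1, c2, c3, c4, mul_one]
    have hEf : (∫ ω, f (X ω) ∂P) = ∫ z, f z ∂μ2 := by
      have h1 : (∫ ω, f (X ω) ∂P) = ∫ x, f (Tsel ∅ x) ∂(Measure.pi ρ) := by
        refine Eq.trans ?_ (key (fun x => f (Tsel ∅ x)) (hf.comp (measurable_Tsel ∅)))
        exact integral_congr_ae (ae_of_all _ fun ω => by beta_reduce; rw [hT0 ω])
      have c1 := hmes.integral_comp e.symm.measurableEmbedding (fun x => f (Tsel ∅ x))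
      have c2 : (∫ p, f (Tsel (∅ : Finset (Fin n)) (e.symm p)) ∂(μ1.prod μ2))
          = ∫ p : (Fin n → 𝒳) × (Fin n → 𝒳), f p.1 * (fun _ : Fin n → 𝒳 => (1 : ℂ)) p.2
            ∂(μ1.prod μ2) := by
        refine integral_congr_ae (ae_of_all _ fun p => ?_)
        beta_reduce
        rw [hTl p]; simp
      have c3 := integral_prod_mul (μ := μ1) (ν := μ2) f (fun _ => (1 : ℂ))
      have c4 : (∫ z, (1 : ℂ) ∂μ2) = 1 := by simp
      have hμeq : μ1 = μ2 := rfl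
      rw [h1, ← c1, c2, c3, c4, mul_one, hμeq]
    rw [hEh, hEf, hJu]
  -- assemble
  have hRHS : ∀ A ∈ (Finset.univ : Finset (Fin n)).powerset.filter (· ≠ Finset.univ),
      (1 / ((n.choose A.card : ℂ) * ((n - A.card : ℕ) : ℂ))) *
        ∑ j ∈ Aᶜ, (∫ ω, (h (X ω) - h (fun i => if i = j then X' ω i else X ω i)) *
              (f (fun i => if i ∈ A then X' ω i else X ω i) -
               f (fun i => if i ∈ insert j A then X' ω i else X ω i)) ∂P)
      = 2 * ((1 / ((n.choose A.card : ℂ) * ((n - A.card : ℕ) : ℂ))) *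
        ∑ j ∈ Aᶜ, (J ∅ A - J ∅ (insert j A))) := by
    intro A hA
    have hc : ∀ j ∈ Aᶜ,
        (∫ ω, (h (X ω) - h (fun i => if i = j then X' ω i else X ω i)) *
              (f (fun i => if i ∈ A then X' ω i else X ω i) -
               f (fun i => if i ∈ insert j A then X' ω i else X ω i)) ∂P)
        = 2 * (J ∅ A - J ∅ (insert j A)) := fun j hj =>
      hterm A j (Finset.mem_compl.mp hj)
    rw [Finset.sum_congr rfl hc, ← Finset.mul_sum]
    ring
  rw [hLHS1, hprod, Finset.sum_congr rfl hRHS, ← Finset.mul_sum, ← mul_assoc,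
    show (1 / 2 : ℂ) * 2 = 1 by norm_num, one_mul]
  exact (telescope n (fun A => J ∅ A)).symm
end

section
/- Let $X$ be a vector of independent random variables with independent copy $X'$, and let $h,f$ be bounded measurable functions. For any $A\subseteq[n]$ and $j\notin A$, one has $\mathbb E\{h(X)\,(f(X^A)-f(X^{A\cup\{j\}}))\} = \mathbb E\{h(X^{\{j\}})\,(f(X^{A\cup\{j\}})-f(X^A))\}$, and consequently $\mathbb E\{h(X)(f(X^A)-f(X^{A\cup\{j\}}))\} = \tfrac12\,\mathbb E\{\Delta_j h(X)\,\Delta_j f(X^A)\}$ where $\Delta_j h(X)=h(X)-h(X^{\{j\}})$ and $\Delta_j f(X^A)=f(X^A)-f(X^{A\cup\{j\}})$. -/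
open MeasureTheory ProbabilityTheory Finset

lemma bdd_integrable {Ω : Type*} [MeasurableSpace Ω] (P : Measure Ω) [IsFiniteMeasure P]
    {g : Ω → ℂ} (hm : Measurable g) (hb : ∃ M, ∀ ω, ‖g ω‖ ≤ M) : Integrable g P := by
  obtain ⟨M, hM⟩ := hb
  exact ⟨hm.aestronglyMeasurable, HasFiniteIntegral.of_bounded (ae_of_all _ hM)⟩

lemma map_fun_eq_pi {Ω ι κ : Type*} [Fintype ι] [MeasurableSpace Ω] [MeasurableSpace κ]
    (P : Measure Ω) [IsProbabilityMeasure P] (F : ι → Ω → κ) (hm : ∀ i, Measurable (F i))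
    (hind : iIndepFun F P) :
    P.map (fun ω i => F i ω) = Measure.pi (fun i => P.map (F i)) := by
  haveI : ∀ i, IsProbabilityMeasure (P.map (F i)) :=
    fun i => Measure.isProbabilityMeasure_map (hm i).aemeasurable
  refine (Measure.pi_eq (μ := fun i => P.map (F i)) fun s hs => ?_).symm
  rw [Measure.map_apply (measurable_pi_lambda _ hm) (MeasurableSet.univ_pi hs)]
  have hpre : (fun ω i => F i ω) ⁻¹' Set.univ.pi s = ⋂ i, F i ⁻¹' s i := by
    ext ω; simp [Set.mem_univ_pi]
  rw [hpre, hind.meas_iInter (fun i => ⟨s i, hs i, rfl⟩)]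
  exact Finset.prod_congr rfl fun i _ => (Measure.map_apply (hm i) (hs i)).symm

/-- Exchange-symmetry identity: the key step in the proof of Chatterjee's covariance
formula. -/
theorem chatterjee_exchange_identity
    {Ω 𝒳 : Type*} [MeasurableSpace Ω] [MeasurableSpace 𝒳]
    (P : Measure Ω) [IsProbabilityMeasure P] (n : ℕ)
    (X X' : Ω → Fin n → 𝒳)
    (hXm : ∀ i, Measurable fun ω => X ω i)
    (hX'm : ∀ i, Measurable fun ω => X' ω i)
    (hindep : iIndepFun
      (fun p => Sum.elim (fun i ω => X ω i) (fun i ω => X' ω i) p) P)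
    (hid : ∀ i, IdentDistrib (fun ω => X ω i) (fun ω => X' ω i) P P)
    (h f : (Fin n → 𝒳) → ℂ) (hf : Measurable f) (hh : Measurable h)
    (hfb : ∃ M, ∀ x, ‖f x‖ ≤ M) (hhb : ∃ M, ∀ x, ‖h x‖ ≤ M)
    (A : Finset (Fin n)) (j : Fin n) (hj : j ∉ A) :
    ((∫ ω, h (X ω) * (f (fun i => if i ∈ A then X' ω i else X ω i) -
          f (fun i => if i ∈ insert j A then X' ω i else X ω i)) ∂P)
        = ∫ ω, h (fun i => if i = j then X' ω i else X ω i) *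
            (f (fun i => if i ∈ insert j A then X' ω i else X ω i) -
             f (fun i => if i ∈ A then X' ω i else X ω i)) ∂P) ∧
    ((∫ ω, h (X ω) * (f (fun i => if i ∈ A then X' ω i else X ω i) -
          f (fun i => if i ∈ insert j A then X' ω i else X ω i)) ∂P)
        = (1 / 2) * ∫ ω, (h (X ω) - h (fun i => if i = j then X' ω i else X ω i)) *
            (f (fun i => if i ∈ A then X' ω i else X ω i) -
             f (fun i => if i ∈ insert j A then X' ω i else X ω i)) ∂P) := by
  classical
  -- setup
  set F : Fin n ⊕ Fin n → Ω → 𝒳 :=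
    fun p => Sum.elim (fun i ω => X ω i) (fun i ω => X' ω i) p with hF
  have hFm : ∀ p, Measurable (F p) := by rintro (i | i); exacts [hXm i, hX'm i]
  set Y : Ω → (Fin n ⊕ Fin n) → 𝒳 := fun ω p => F p ω with hY
  have hYm : Measurable Y := measurable_pi_lambda _ hFm
  set ν : Fin n ⊕ Fin n → Measure 𝒳 := fun p => P.map (F p) with hν
  haveI : ∀ p, IsProbabilityMeasure (ν p) :=
    fun p => Measure.isProbabilityMeasure_map (hFm p).aemeasurable
  have hmap : P.map Y = Measure.pi ν := map_fun_eq_pi P F hFm hindep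
  set e : (Fin n ⊕ Fin n) ≃ (Fin n ⊕ Fin n) := Equiv.swap (Sum.inl j) (Sum.inr j) with he
  have hνe : (fun p => ν (e p)) = ν := by
    funext p
    rcases p with i | i
    · by_cases hij : i = j
      · subst hij
        have : e (Sum.inl i) = Sum.inr i := Equiv.swap_apply_left _ _
        rw [this]
        exact ((hid i).map_eq).symm
      · have : e (Sum.inl i) = Sum.inl i :=
          Equiv.swap_apply_of_ne_of_ne (by simpa using hij) (by simp)
        rw [this]
    · by_cases hij : i = j
      · subst hij
        have : e (Sum.inr i) = Sum.inl i := Equiv.swap_apply_right _ _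
        rw [this]
        exact (hid i).map_eq
      · have : e (Sum.inr i) = Sum.inr i :=
          Equiv.swap_apply_of_ne_of_ne (by simp) (by simpa using hij)
        rw [this]
  set T := MeasurableEquiv.piCongrLeft (fun _ : Fin n ⊕ Fin n => 𝒳) e with hT
  have hTapp : ∀ (g : (Fin n ⊕ Fin n) → 𝒳) (b : Fin n ⊕ Fin n), T g b = g (e b) := by
    intro g b
    simp only [hT, MeasurableEquiv.coe_piCongrLeft, Equiv.piCongrLeft, Equiv.symm_symm,
      Equiv.piCongrLeft', eq_rec_constant, Equiv.coe_fn_symm_mk, Equiv.coe_fn_mk,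
      Equiv.symm_swap, he]
    exact eq_rec_constant _ _
  have hpres : MeasurePreserving T (Measure.pi ν) (Measure.pi ν) := by
    have := MeasureTheory.measurePreserving_piCongrLeft (μ := ν) e
    rwa [hνe] at this
  -- the two integrands as functions of the joint vector
  set G : ((Fin n ⊕ Fin n) → 𝒳) → ℂ := fun g =>
    h (fun i => g (Sum.inl i)) *
      (f (fun i => if i ∈ A then g (Sum.inr i) else g (Sum.inl i)) -
       f (fun i => if i ∈ insert j A then g (Sum.inr i) else g (Sum.inl i))) with hG
  set G' : ((Fin n ⊕ Fin n) → 𝒳) → ℂ := fun g =>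
    h (fun i => if i = j then g (Sum.inr i) else g (Sum.inl i)) *
      (f (fun i => if i ∈ insert j A then g (Sum.inr i) else g (Sum.inl i)) -
       f (fun i => if i ∈ A then g (Sum.inr i) else g (Sum.inl i))) with hG'
  have hselm : ∀ (B : Finset (Fin n)),
      Measurable fun (g : (Fin n ⊕ Fin n) → 𝒳) i =>
        if i ∈ B then g (Sum.inr i) else g (Sum.inl i) := by
    intro B
    refine measurable_pi_lambda _ fun i => ?_
    split_ifs <;> exact measurable_pi_apply _
  have hGm : Measurable G := by
    refine ((hh.comp (measurable_pi_lambda _ fun i => measurable_pi_apply _)).mul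
      (((hf.comp (hselm A))).sub (hf.comp (hselm (insert j A)))))
  have hG'm : Measurable G' := by
    refine ((hh.comp ?_).mul
      (((hf.comp (hselm (insert j A)))).sub (hf.comp (hselm A))))
    refine measurable_pi_lambda _ fun i => ?_
    split_ifs <;> exact measurable_pi_apply _
  -- key symmetry computation
  have hG'T : ∀ g, G' g = G (T g) := by
    intro g
    have h1 : (fun i => T g (Sum.inl i)) =
        (fun i => if i = j then g (Sum.inr i) else g (Sum.inl i)) := by
      funext i
      rw [hTapp]
      by_cases hij : i = j
      · subst hij; rw [Equiv.swap_apply_left]; simp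
      · rw [Equiv.swap_apply_of_ne_of_ne (by simpa using hij) (by simp)]
        simp [hij]
    have h2 : (fun i => if i ∈ A then T g (Sum.inr i) else T g (Sum.inl i)) =
        (fun i => if i ∈ insert j A then g (Sum.inr i) else g (Sum.inl i)) := by
      funext i
      by_cases hiA : i ∈ A
      · have hij : i ≠ j := fun hc => hj (hc ▸ hiA)
        rw [if_pos hiA, if_pos (mem_insert_of_mem hiA), hTapp,
          Equiv.swap_apply_of_ne_of_ne (by simp) (by simpa using hij)]
      · by_cases hij : i = j
        · subst hij
          rw [if_neg hiA, if_pos (mem_insert_self _ _), hTapp, Equiv.swap_apply_left]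
        · rw [if_neg hiA, if_neg (by simp [hij, hiA]), hTapp,
            Equiv.swap_apply_of_ne_of_ne (by simpa using hij) (by simp)]
    have h3 : (fun i => if i ∈ insert j A then T g (Sum.inr i) else T g (Sum.inl i)) =
        (fun i => if i ∈ A then g (Sum.inr i) else g (Sum.inl i)) := by
      funext i
      by_cases hiA : i ∈ A
      · have hij : i ≠ j := fun hc => hj (hc ▸ hiA)
        rw [if_pos (mem_insert_of_mem hiA), if_pos hiA, hTapp,
          Equiv.swap_apply_of_ne_of_ne (by simp) (by simpa using hij)]
      · by_cases hij : i = j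
        · subst hij
          rw [if_pos (mem_insert_self _ _), if_neg hiA, hTapp, Equiv.swap_apply_right]
        · rw [if_neg (by simp [hij, hiA]), if_neg hiA, hTapp,
            Equiv.swap_apply_of_ne_of_ne (by simpa using hij) (by simp)]
    simp only [hG, hG', h1, h2, h3]
  -- first identity
  have hLHS : (∫ ω, h (X ω) * (f (fun i => if i ∈ A then X' ω i else X ω i) -
          f (fun i => if i ∈ insert j A then X' ω i else X ω i)) ∂P)
      = ∫ ω, G (Y ω) ∂P := rfl
  have hRHS : (∫ ω, h (fun i => if i = j then X' ω i else X ω i) *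
            (f (fun i => if i ∈ insert j A then X' ω i else X ω i) -
             f (fun i => if i ∈ A then X' ω i else X ω i)) ∂P)
      = ∫ ω, G' (Y ω) ∂P := rfl
  have first : (∫ ω, h (X ω) * (f (fun i => if i ∈ A then X' ω i else X ω i) -
          f (fun i => if i ∈ insert j A then X' ω i else X ω i)) ∂P)
      = ∫ ω, h (fun i => if i = j then X' ω i else X ω i) *
            (f (fun i => if i ∈ insert j A then X' ω i else X ω i) -
             f (fun i => if i ∈ A then X' ω i else X ω i)) ∂P := by
    rw [hLHS, hRHS]
    calc ∫ ω, G (Y ω) ∂P = ∫ g, G g ∂(P.map Y) :=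
          (integral_map hYm.aemeasurable hGm.aestronglyMeasurable).symm
      _ = ∫ g, G g ∂(Measure.pi ν) := by rw [hmap]
      _ = ∫ g, G (T g) ∂(Measure.pi ν) :=
          (hpres.integral_comp T.measurableEmbedding G).symm
      _ = ∫ g, G' g ∂(Measure.pi ν) := by
          refine integral_congr_ae (ae_of_all _ fun g => (hG'T g).symm)
      _ = ∫ g, G' g ∂(P.map Y) := by rw [hmap]
      _ = ∫ ω, G' (Y ω) ∂P := integral_map hYm.aemeasurable hG'm.aestronglyMeasurable
  refine ⟨first, ?_⟩
  -- second identity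
  obtain ⟨Mf, hMf⟩ := hfb
  obtain ⟨Mh, hMh⟩ := hhb
  have hm1 : Measurable fun ω => h (X ω) :=
    hh.comp (measurable_pi_lambda _ hXm)
  have hm2 : Measurable fun ω => h (fun i => if i = j then X' ω i else X ω i) := by
    refine hh.comp (measurable_pi_lambda _ fun i => ?_)
    split_ifs <;> [exact hX'm i; exact hXm i]
  have hmw : Measurable fun ω => (f (fun i => if i ∈ A then X' ω i else X ω i) -
      f (fun i => if i ∈ insert j A then X' ω i else X ω i)) := by
    have hs : ∀ B : Finset (Fin n),
        Measurable fun ω => f (fun i => if i ∈ B then X' ω i else X ω i) := by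
      intro B
      refine hf.comp (measurable_pi_lambda _ fun i => ?_)
      split_ifs <;> [exact hX'm i; exact hXm i]
    exact (hs A).sub (hs (insert j A))
  have hi1 : Integrable (fun ω => h (X ω) *
      (f (fun i => if i ∈ A then X' ω i else X ω i) -
       f (fun i => if i ∈ insert j A then X' ω i else X ω i))) P := by
    refine bdd_integrable P (hm1.mul hmw) ⟨Mh * (Mf + Mf), fun ω => ?_⟩
    rw [norm_mul]
    have hMh0 : (0:ℝ) ≤ Mh := le_trans (norm_nonneg _) (hMh (X ω))
    refine mul_le_mul (hMh _) (le_trans (norm_sub_le _ _) (add_le_add (hMf _) (hMf _)))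
      (norm_nonneg _) hMh0
  have hi2 : Integrable (fun ω => h (fun i => if i = j then X' ω i else X ω i) *
      (f (fun i => if i ∈ A then X' ω i else X ω i) -
       f (fun i => if i ∈ insert j A then X' ω i else X ω i))) P := by
    refine bdd_integrable P (hm2.mul hmw) ⟨Mh * (Mf + Mf), fun ω => ?_⟩
    rw [norm_mul]
    have hMh0 : (0:ℝ) ≤ Mh := le_trans (norm_nonneg _) (hMh (X ω))
    refine mul_le_mul (hMh _) (le_trans (norm_sub_le _ _) (add_le_add (hMf _) (hMf _)))
      (norm_nonneg _) hMh0
  have hneg : (∫ ω, h (fun i => if i = j then X' ω i else X ω i) *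
      (f (fun i => if i ∈ A then X' ω i else X ω i) -
       f (fun i => if i ∈ insert j A then X' ω i else X ω i)) ∂P)
      = - ∫ ω, h (X ω) * (f (fun i => if i ∈ A then X' ω i else X ω i) -
          f (fun i => if i ∈ insert j A then X' ω i else X ω i)) ∂P := by
    rw [first, ← integral_neg]
    refine integral_congr_ae (ae_of_all _ fun ω => ?_)
    ring
  have hsplit : (∫ ω, (h (X ω) - h (fun i => if i = j then X' ω i else X ω i)) *
      (f (fun i => if i ∈ A then X' ω i else X ω i) -
       f (fun i => if i ∈ insert j A then X' ω i else X ω i)) ∂P)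
      = (∫ ω, h (X ω) * (f (fun i => if i ∈ A then X' ω i else X ω i) -
          f (fun i => if i ∈ insert j A then X' ω i else X ω i)) ∂P)
        - ∫ ω, h (fun i => if i = j then X' ω i else X ω i) *
            (f (fun i => if i ∈ A then X' ω i else X ω i) -
             f (fun i => if i ∈ insert j A then X' ω i else X ω i)) ∂P := by
    rw [← integral_sub hi1 hi2]
    refine integral_congr_ae (ae_of_all _ fun ω => ?_)
    ring
  rw [hsplit, hneg]
  ring
end
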